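/- Assume experts die in order e_1, e_2, …. At round t when e_1,…,e_{i−1} are dead, the multiset λ(ℰ_{e_i}^t, t) equals (e_i) prepended to λ(⋃_{j=i+1}^K ℰ_{e_j}^t, t); in particular |ℰ_{e_i}^t| = |λ(⋃_{j=i+1}^K ℰ_{e_j}^t, t)|. -/

import Mathlib

namespace DyingGroupAux

/-- A function `v` is *good* if it is the "leader" function of some ordering:
`v s` is at least `s`, and every `e` between `s` and `v s` has the same leader. -/
def Good {K : ℕ} (v : Fin K → Fin K) : Prop :=
  (∀ s, s ≤ v s) ∧ ∀ s e : Fin K, s ≤ e → e ≤ v s → v e = v s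

lemma Good.idem {K : ℕ} {v : Fin K → Fin K} (hv : Good v) (s : Fin K) : v (v s) = v s :=
  hv.2 s (v s) (hv.1 s) le_rfl

lemma card_filter_lt {K : ℕ} (S : Finset (Fin K)) {e1 e2 : Fin K} (h1 : e1 ∈ S) (h : e1 < e2) :
    (S.filter (· < e1)).card < (S.filter (· < e2)).card := by
  apply Finset.card_lt_card
  refine (Finset.ssubset_iff_of_subset ?_).mpr ⟨e1, Finset.mem_filter.mpr ⟨h1, h⟩, by simp⟩
  intro x hx
  rw [Finset.mem_filter] at hx ⊢
  exact ⟨hx.1, lt_trans hx.2 h⟩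


lemma drop_finRange_cons {K n : ℕ} (h : n < K) :
    (List.finRange K).drop n = (⟨n, h⟩ : Fin K) :: (List.finRange K).drop (n + 1) := by
  rw [List.drop_eq_getElem_cons (by simpa using h)]
  congr 1
  apply Fin.ext
  simp [List.getElem_finRange]

section
variable {K : ℕ} (beh : Equiv.Perm (Fin K) → Fin K → Fin K)
  (hbeh : ∀ (π : Equiv.Perm (Fin K)) (s : Fin K),
      (s : ℕ) ≤ (beh π s : ℕ) ∧
      ∀ e : Fin K, (s : ℕ) ≤ (e : ℕ) → π.symm (beh π s) ≤ π.symm e)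

include hbeh

lemma beh_eq (π : Equiv.Perm (Fin K)) (s x : Fin K) (hx : s ≤ x)
    (hmin : ∀ e : Fin K, s ≤ e → π.symm x ≤ π.symm e) : beh π s = x := by
  have h1 := (hbeh π s).2 x (Fin.le_def.mp hx)
  have h2 := hmin (beh π s) (Fin.le_def.mpr (hbeh π s).1)
  exact π.symm.injective (le_antisymm h1 h2)

lemma good_beh (π : Equiv.Perm (Fin K)) : Good (beh π) := by
  constructor
  · intro s; exact Fin.le_def.mpr (hbeh π s).1
  · intro s e hse he
    have h1 := (hbeh π e).2 (beh π s) (Fin.le_def.mp he)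
    have h2 := (hbeh π s).2 (beh π e)
      (le_trans (Fin.le_def.mp hse) (hbeh π e).1)
    exact π.symm.injective (le_antisymm h1 h2)

lemma realize (v : Fin K → Fin K) (hv : Good v) : ∃ π, beh π = v := by
  classical
  set L : Finset (Fin K) := Finset.univ.filter (fun e => v e = e) with hL
  set N : Finset (Fin K) := Finset.univ.filter (fun e => ¬ v e = e) with hN
  have hLN : L.card + N.card = K := by
    rw [hL, hN, Finset.card_filter_add_card_filter_not]
    simp
  have hmemL : ∀ e : Fin K, v e = e → e ∈ L := fun e he =>
    Finset.mem_filter.mpr ⟨Finset.mem_univ _, he⟩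
  have hmemN : ∀ e : Fin K, ¬ v e = e → e ∈ N := fun e he =>
    Finset.mem_filter.mpr ⟨Finset.mem_univ _, he⟩
  have hssub : ∀ (S : Finset (Fin K)) (e : Fin K), e ∈ S →
      (S.filter (· < e)).card < S.card := by
    intro S e he
    apply Finset.card_lt_card
    exact (Finset.ssubset_iff_of_subset (Finset.filter_subset _ _)).mpr
      ⟨e, he, by simp⟩
  have hbound1 : ∀ e : Fin K, v e = e → (L.filter (· < e)).card < K := by
    intro e he
    calc (L.filter (· < e)).card < L.card := hssub L e (hmemL e he)
      _ ≤ K := le_trans (Nat.le_add_right _ _) (le_of_eq hLN)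
  have hbound2 : ∀ e : Fin K, ¬ v e = e → L.card + (N.filter (· < e)).card < K := by
    intro e he
    have := hssub N e (hmemN e he)
    omega
  set ρ : Fin K → Fin K := fun e =>
    if h : v e = e then ⟨(L.filter (· < e)).card, hbound1 e h⟩
    else ⟨L.card + (N.filter (· < e)).card, hbound2 e h⟩ with hρ
  have hρleader : ∀ e (h : v e = e), (ρ e : ℕ) = (L.filter (· < e)).card := by
    intro e h; simp only [hρ, dif_pos h]
  have hρnon : ∀ e (h : ¬ v e = e), (ρ e : ℕ) = L.card + (N.filter (· < e)).card := by
    intro e h; simp only [hρ, dif_neg h]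
  have hinj : Function.Injective ρ := by
    have key : ∀ a b : Fin K, a < b → ρ a ≠ ρ b := by
      intro a b hab heq
      have hval : (ρ a : ℕ) = (ρ b : ℕ) := by rw [heq]
      by_cases ha : v a = a <;> by_cases hb : v b = b
      · rw [hρleader a ha, hρleader b hb] at hval
        exact absurd hval (Nat.ne_of_lt (card_filter_lt L (hmemL a ha) hab))
      · rw [hρleader a ha, hρnon b hb] at hval
        have := hssub L a (hmemL a ha)
        omega
      · rw [hρnon a ha, hρleader b hb] at hval
        have := hssub L b (hmemL b hb)
        omega
      · rw [hρnon a ha, hρnon b hb] at hval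
        have := card_filter_lt N (hmemN a ha) hab
        omega
    intro a b h
    by_contra hne
    rcases lt_or_gt_of_ne hne with hlt | hlt
    · exact key a b hlt h
    · exact key b a hlt h.symm
  have hbij := Finite.injective_iff_bijective.mp hinj
  refine ⟨(Equiv.ofBijective ρ hbij).symm, ?_⟩
  funext s
  apply beh_eq beh hbeh _ s (v s) (hv.1 s)
  intro e hse
  show ρ (v s) ≤ ρ e
  have hvs : v (v s) = v s := hv.idem s
  rw [Fin.le_def, hρleader (v s) hvs]
  by_cases he : v e = e
  · rw [hρleader e he]
    have hvse : v s ≤ e := by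
      by_contra hlt
      push_neg at hlt
      have h2 := hv.2 s e hse (le_of_lt hlt)
      rw [he] at h2
      exact absurd h2 (ne_of_lt hlt)
    apply Finset.card_le_card
    intro x hx
    rw [Finset.mem_filter] at hx ⊢
    exact ⟨hx.1, lt_of_lt_of_le hx.2 hvse⟩
  · rw [hρnon e he]
    exact le_trans (le_of_lt (hssub L (v s) (hmemL _ hvs))) (Nat.le_add_right _ _)

lemma mem_image_iff (x : Fin K → Fin K) :
    x ∈ (Finset.univ : Finset (Equiv.Perm (Fin K))).image beh ↔ Good x := by
  constructor
  · intro hx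
    obtain ⟨π, -, rfl⟩ := Finset.mem_image.mp hx
    exact good_beh beh hbeh π
  · intro hx
    obtain ⟨π, hπ⟩ := realize beh hbeh x hx
    exact Finset.mem_image.mpr ⟨π, Finset.mem_univ _, hπ⟩

end

section PhiPsi

variable {K t : ℕ}

/-- Flip: make `t` the leader on the stretch where the leader of `t` ruled. -/
def phi (ht : t + 1 < K) (b : Fin K → Fin K) : Fin K → Fin K :=
  fun s => if s ≤ ⟨t, Nat.lt_of_succ_lt ht⟩ ∧ b s = b ⟨t, Nat.lt_of_succ_lt ht⟩ then ⟨t, Nat.lt_of_succ_lt ht⟩ else b s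

/-- Unflip: replace `t` as leader by the leader of `t+1`. -/
def psi (ht : t + 1 < K) (a : Fin K → Fin K) : Fin K → Fin K :=
  fun s => if a s = ⟨t, Nat.lt_of_succ_lt ht⟩ then a ⟨t + 1, ht⟩ else a s

variable (ht : t + 1 < K)

lemma phi_pos (b : Fin K → Fin K) {s : Fin K}
    (hc : s ≤ (⟨t, Nat.lt_of_succ_lt ht⟩ : Fin K) ∧ b s = b ⟨t, Nat.lt_of_succ_lt ht⟩) :
    phi ht b s = ⟨t, Nat.lt_of_succ_lt ht⟩ := if_pos hc

lemma phi_neg (b : Fin K → Fin K) {s : Fin K}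
    (hc : ¬(s ≤ (⟨t, Nat.lt_of_succ_lt ht⟩ : Fin K) ∧ b s = b ⟨t, Nat.lt_of_succ_lt ht⟩)) :
    phi ht b s = b s := if_neg hc

lemma psi_pos (a : Fin K → Fin K) {s : Fin K} (h : a s = (⟨t, Nat.lt_of_succ_lt ht⟩ : Fin K)) :
    psi ht a s = a ⟨t + 1, ht⟩ := if_pos h

lemma psi_neg (a : Fin K → Fin K) {s : Fin K} (h : ¬ a s = (⟨t, Nat.lt_of_succ_lt ht⟩ : Fin K)) :
    psi ht a s = a s := if_neg h

lemma phi_at_t (b : Fin K → Fin K) : phi ht b ⟨t, Nat.lt_of_succ_lt ht⟩ = ⟨t, Nat.lt_of_succ_lt ht⟩ :=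
  phi_pos ht b ⟨le_rfl, rfl⟩

lemma tF_lt_bt {b : Fin K → Fin K} (hb : Good b)
    (hbt : b ⟨t, Nat.lt_of_succ_lt ht⟩ ≠ ⟨t, Nat.lt_of_succ_lt ht⟩) : (⟨t, Nat.lt_of_succ_lt ht⟩ : Fin K) < b ⟨t, Nat.lt_of_succ_lt ht⟩ :=
  lt_of_le_of_ne (hb.1 _) (Ne.symm hbt)

lemma tS_le_bt {b : Fin K → Fin K} (hb : Good b)
    (hbt : b ⟨t, Nat.lt_of_succ_lt ht⟩ ≠ ⟨t, Nat.lt_of_succ_lt ht⟩) : (⟨t + 1, ht⟩ : Fin K) ≤ b ⟨t, Nat.lt_of_succ_lt ht⟩ := by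
  have h1 := Fin.lt_def.mp (tF_lt_bt ht hb hbt)
  rw [Fin.le_def]
  simp only [Fin.val_mk] at h1 ⊢
  omega

lemma bt_eq_btS {b : Fin K → Fin K} (hb : Good b)
    (hbt : b ⟨t, Nat.lt_of_succ_lt ht⟩ ≠ ⟨t, Nat.lt_of_succ_lt ht⟩) : b ⟨t, Nat.lt_of_succ_lt ht⟩ = b ⟨t + 1, ht⟩ := by
  refine (hb.2 ⟨t, Nat.lt_of_succ_lt ht⟩ ⟨t + 1, ht⟩ ?_ (tS_le_bt ht hb hbt)).symm
  rw [Fin.le_def]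
  simp only [Fin.val_mk]
  omega

lemma good_phi {b : Fin K → Fin K} (hb : Good b)
    (hbt : b ⟨t, Nat.lt_of_succ_lt ht⟩ ≠ ⟨t, Nat.lt_of_succ_lt ht⟩) : Good (phi ht b) := by
  have htlt : (⟨t, Nat.lt_of_succ_lt ht⟩ : Fin K) < b ⟨t, Nat.lt_of_succ_lt ht⟩ := tF_lt_bt ht hb hbt
  constructor
  · intro s
    by_cases hc : s ≤ (⟨t, Nat.lt_of_succ_lt ht⟩ : Fin K) ∧ b s = b ⟨t, Nat.lt_of_succ_lt ht⟩
    · rw [phi_pos ht b hc]; exact hc.1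
    · rw [phi_neg ht b hc]; exact hb.1 s
  · intro s e hse he
    by_cases hc : s ≤ (⟨t, Nat.lt_of_succ_lt ht⟩ : Fin K) ∧ b s = b ⟨t, Nat.lt_of_succ_lt ht⟩
    · rw [phi_pos ht b hc] at he ⊢
      have hebs : e ≤ b s := le_trans he (le_trans (le_of_lt htlt) (le_of_eq hc.2.symm))
      have hbe : b e = b s := hb.2 s e hse hebs
      exact phi_pos ht b ⟨he, by rw [hbe, hc.2]⟩
    · rw [phi_neg ht b hc] at he ⊢
      have hbe : b e = b s := hb.2 s e hse he
      rw [phi_neg ht b ?_, hbe]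
      rintro ⟨h1, h2⟩
      exact hc ⟨le_trans hse h1, by rw [← hbe, h2]⟩

lemma psi_phi {b : Fin K → Fin K} (hb : Good b)
    (hbt : b ⟨t, Nat.lt_of_succ_lt ht⟩ ≠ ⟨t, Nat.lt_of_succ_lt ht⟩) : psi ht (phi ht b) = b := by
  have hbtS : b ⟨t, Nat.lt_of_succ_lt ht⟩ = b ⟨t + 1, ht⟩ := bt_eq_btS ht hb hbt
  have hphitS : phi ht b ⟨t + 1, ht⟩ = b ⟨t + 1, ht⟩ := by
    refine phi_neg ht b ?_
    rintro ⟨h1, -⟩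
    have h2 := Fin.le_def.mp h1
    simp only [Fin.val_mk] at h2
    omega
  funext s
  by_cases hc : s ≤ (⟨t, Nat.lt_of_succ_lt ht⟩ : Fin K) ∧ b s = b ⟨t, Nat.lt_of_succ_lt ht⟩
  · rw [psi_pos ht _ (phi_pos ht b hc), hphitS, ← hbtS, hc.2]
  · have h2 : b s ≠ (⟨t, Nat.lt_of_succ_lt ht⟩ : Fin K) := by
      intro h
      apply hbt
      have := hb.idem s
      rw [h] at this
      exact this
    rw [psi_neg ht _ (by rw [phi_neg ht b hc]; exact h2), phi_neg ht b hc]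

lemma good_psi {a : Fin K → Fin K} (ha : Good a)
    (hat : a ⟨t, Nat.lt_of_succ_lt ht⟩ = ⟨t, Nat.lt_of_succ_lt ht⟩) : Good (psi ht a) := by
  have hmtS : (⟨t + 1, ht⟩ : Fin K) ≤ a ⟨t + 1, ht⟩ := ha.1 _
  have hmne : a ⟨t + 1, ht⟩ ≠ (⟨t, Nat.lt_of_succ_lt ht⟩ : Fin K) := by
    intro h
    have h1 := Fin.le_def.mp hmtS
    rw [h] at h1
    simp only [Fin.val_mk] at h1
    omega
  constructor
  · intro s
    by_cases h : a s = (⟨t, Nat.lt_of_succ_lt ht⟩ : Fin K)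
    · rw [psi_pos ht a h]
      have h1 : s ≤ (⟨t, Nat.lt_of_succ_lt ht⟩ : Fin K) := h ▸ ha.1 s
      refine le_trans h1 (le_trans ?_ hmtS)
      rw [Fin.le_def]
      simp only [Fin.val_mk]
      omega
    · rw [psi_neg ht a h]; exact ha.1 s
  · intro s e hse he
    by_cases h : a s = (⟨t, Nat.lt_of_succ_lt ht⟩ : Fin K)
    · rw [psi_pos ht a h] at he ⊢
      by_cases h2 : e ≤ (⟨t, Nat.lt_of_succ_lt ht⟩ : Fin K)
      · have hae : a e = a s := ha.2 s e hse (le_trans h2 (le_of_eq h.symm))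
        rw [psi_pos ht a (by rw [hae, h])]
      · have h3 : (⟨t + 1, ht⟩ : Fin K) ≤ e := by
          rw [Fin.le_def] at h2 ⊢
          simp only [Fin.val_mk] at h2 ⊢
          omega
        have hae : a e = a ⟨t + 1, ht⟩ := ha.2 ⟨t + 1, ht⟩ e h3 he
        rw [psi_neg ht a (by rw [hae]; exact hmne), hae]
    · rw [psi_neg ht a h] at he ⊢
      have hae : a e = a s := ha.2 s e hse he
      rw [psi_neg ht a (by rw [hae]; exact h), hae]

lemma phi_psi {a : Fin K → Fin K} (ha : Good a)
    (hat : a ⟨t, Nat.lt_of_succ_lt ht⟩ = ⟨t, Nat.lt_of_succ_lt ht⟩) : phi ht (psi ht a) = a := by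
  have hmtS : (⟨t + 1, ht⟩ : Fin K) ≤ a ⟨t + 1, ht⟩ := ha.1 _
  have hpsit : psi ht a ⟨t, Nat.lt_of_succ_lt ht⟩ = a ⟨t + 1, ht⟩ := psi_pos ht a hat
  funext s
  by_cases h : a s = (⟨t, Nat.lt_of_succ_lt ht⟩ : Fin K)
  · have h2 : s ≤ (⟨t, Nat.lt_of_succ_lt ht⟩ : Fin K) := h ▸ ha.1 s
    rw [phi_pos ht _ ⟨h2, by rw [psi_pos ht a h, hpsit]⟩, h]
  · rw [phi_neg ht _ ?_, psi_neg ht a h]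
    rintro ⟨hc1, hc2⟩
    rw [psi_neg ht a h, hpsit] at hc2
    -- hc2 : a s = a ⟨t+1⟩, hc1 : s ≤ t : then a t = a s, so t = a s ≥ t+1, contradiction
    have h3 : (⟨t, Nat.lt_of_succ_lt ht⟩ : Fin K) ≤ a s := by
      rw [hc2, Fin.le_def]
      have h4 := Fin.le_def.mp hmtS
      simp only [Fin.val_mk] at h4 ⊢
      omega
    have h4 := ha.2 s ⟨t, Nat.lt_of_succ_lt ht⟩ hc1 h3
    rw [hat, hc2] at h4
    have h5 := congrArg Fin.val h4
    have h6 := Fin.le_def.mp hmtS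
    simp only [Fin.val_mk] at h5 h6
    omega

lemma trace_phi {b : Fin K → Fin K} (hb : Good b)
    (hbt : b ⟨t, Nat.lt_of_succ_lt ht⟩ ≠ ⟨t, Nat.lt_of_succ_lt ht⟩) :
    (((List.finRange K).drop t).map (phi ht b)).dedup
      = (⟨t, Nat.lt_of_succ_lt ht⟩ : Fin K) :: (((List.finRange K).drop t).map b).dedup := by
  have hlt : t < K := by omega
  have hmem : ∀ x ∈ (List.finRange K).drop (t + 1), t + 1 ≤ (x : ℕ) := by
    intro x hx
    obtain ⟨n, hn, rfl⟩ := List.mem_iff_getElem.mp hx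
    rw [List.getElem_drop, List.getElem_finRange]
    simp
  have htS_mem : (⟨t + 1, ht⟩ : Fin K) ∈ (List.finRange K).drop (t + 1) := by
    rw [drop_finRange_cons ht]
    exact List.mem_cons_self
  have hnotmem : (⟨t, Nat.lt_of_succ_lt ht⟩ : Fin K) ∉ ((List.finRange K).drop (t + 1)).map b := by
    simp only [List.mem_map, not_exists, not_and]
    intro x hx hbx
    have h1 := hmem x hx
    have h2 := Fin.le_def.mp (hb.1 x)
    have h3 := congrArg Fin.val hbx
    simp only [Fin.val_mk] at h3
    omega
  have hbtmem : b ⟨t, Nat.lt_of_succ_lt ht⟩ ∈ ((List.finRange K).drop (t + 1)).map b :=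
    List.mem_map.mpr ⟨⟨t + 1, ht⟩, htS_mem, (bt_eq_btS ht hb hbt).symm⟩
  have hmapeq : ((List.finRange K).drop (t + 1)).map (phi ht b)
      = ((List.finRange K).drop (t + 1)).map b := by
    apply List.map_congr_left
    intro x hx
    refine phi_neg ht b ?_
    rintro ⟨h1, -⟩
    have h2 := hmem x hx
    have h3 := Fin.le_def.mp h1
    simp only [Fin.val_mk] at h3
    omega
  rw [drop_finRange_cons hlt, List.map_cons, List.map_cons, phi_at_t ht b, hmapeq,
    List.dedup_cons_of_notMem hnotmem, List.dedup_cons_of_mem hbtmem]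

end PhiPsi

end DyingGroupAux

theorem dying_group_decomposition (K t : ℕ) (ht : t + 1 < K)
    (beh : Equiv.Perm (Fin K) → Fin K → Fin K)
    (hbeh : ∀ (π : Equiv.Perm (Fin K)) (s : Fin K),
      (s : ℕ) ≤ (beh π s : ℕ) ∧
      ∀ e : Fin K, (s : ℕ) ≤ (e : ℕ) → π.symm (beh π s) ≤ π.symm e) :
    (Multiset.map (fun b : Fin K → Fin K => (((List.finRange K).drop t).map b).dedup)
        ((((Finset.univ : Finset (Equiv.Perm (Fin K))).image beh).filter
          (fun b => b ⟨t, by omega⟩ = ⟨t, by omega⟩)).val)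
      = Multiset.map (fun l : List (Fin K) => (⟨t, by omega⟩ : Fin K) :: l)
          (Multiset.map
            (fun b : Fin K → Fin K => (((List.finRange K).drop t).map b).dedup)
            ((((Finset.univ : Finset (Equiv.Perm (Fin K))).image beh).filter
              (fun b => b ⟨t, by omega⟩ ≠ ⟨t, by omega⟩)).val))) ∧
    ((((Finset.univ : Finset (Equiv.Perm (Fin K))).image beh).filter
        (fun b => b ⟨t, by omega⟩ = ⟨t, by omega⟩)).card
      = Multiset.card
          (Multiset.map
            (fun b : Fin K → Fin K => (((List.finRange K).drop t).map b).dedup)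
            ((((Finset.univ : Finset (Equiv.Perm (Fin K))).image beh).filter
              (fun b => b ⟨t, by omega⟩ ≠ ⟨t, by omega⟩)).val))) := by
  have hGoodIff := DyingGroupAux.mem_image_iff beh hbeh
  have hGinv : ∀ b : Fin K → Fin K,
      b ∈ (Finset.univ : Finset (Equiv.Perm (Fin K))).image beh → DyingGroupAux.Good b :=
    fun b hb => (hGoodIff b).mp hb
  have htSne : ∀ a : Fin K → Fin K, DyingGroupAux.Good a →
      a ⟨t + 1, ht⟩ ≠ (⟨t, by omega⟩ : Fin K) := by
    intro a ha h
    have h1 := Fin.le_def.mp (ha.1 ⟨t + 1, ht⟩)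
    have h2 := congrArg Fin.val h
    simp only [Fin.val_mk] at h1 h2
    omega
  have key : (((Finset.univ : Finset (Equiv.Perm (Fin K))).image beh).filter
          (fun b => b ⟨t, by omega⟩ = ⟨t, by omega⟩))
      = ((((Finset.univ : Finset (Equiv.Perm (Fin K))).image beh).filter
          (fun b => b ⟨t, by omega⟩ ≠ ⟨t, by omega⟩)).image (DyingGroupAux.phi ht)) := by
    ext x
    constructor
    · intro hx
      rw [Finset.mem_filter] at hx
      obtain ⟨hxI, hxt⟩ := hx
      have hGx := hGinv x hxI
      refine Finset.mem_image.mpr ⟨DyingGroupAux.psi ht x, Finset.mem_filter.mpr ⟨?_, ?_⟩, ?_⟩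
      · exact (hGoodIff _).mpr (DyingGroupAux.good_psi ht hGx hxt)
      · rw [DyingGroupAux.psi_pos ht x hxt]
        exact htSne x hGx
      · exact DyingGroupAux.phi_psi ht hGx hxt
    · intro hx
      obtain ⟨b, hbB, rfl⟩ := Finset.mem_image.mp hx
      rw [Finset.mem_filter] at hbB
      obtain ⟨hbI, hbt⟩ := hbB
      have hGb := hGinv b hbI
      exact Finset.mem_filter.mpr ⟨(hGoodIff _).mpr (DyingGroupAux.good_phi ht hGb hbt),
        DyingGroupAux.phi_at_t ht b⟩
  have hinj : Set.InjOn (DyingGroupAux.phi ht)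
      ↑(((Finset.univ : Finset (Equiv.Perm (Fin K))).image beh).filter
          (fun b => b ⟨t, by omega⟩ ≠ ⟨t, by omega⟩)) := by
    intro b1 h1 b2 h2 heq
    simp only [Finset.coe_filter, Set.mem_setOf_eq] at h1 h2
    rw [← DyingGroupAux.psi_phi ht (hGinv b1 h1.1) h1.2, heq,
      DyingGroupAux.psi_phi ht (hGinv b2 h2.1) h2.2]
  have h1 : (Multiset.map (fun b : Fin K → Fin K => (((List.finRange K).drop t).map b).dedup)
        ((((Finset.univ : Finset (Equiv.Perm (Fin K))).image beh).filter
          (fun b => b ⟨t, by omega⟩ = ⟨t, by omega⟩)).val)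
      = Multiset.map (fun l : List (Fin K) => (⟨t, by omega⟩ : Fin K) :: l)
          (Multiset.map
            (fun b : Fin K → Fin K => (((List.finRange K).drop t).map b).dedup)
            ((((Finset.univ : Finset (Equiv.Perm (Fin K))).image beh).filter
              (fun b => b ⟨t, by omega⟩ ≠ ⟨t, by omega⟩)).val))) := by
    rw [key, Finset.image_val_of_injOn hinj, Multiset.map_map, Multiset.map_map]
    apply Multiset.map_congr rfl
    intro b hb
    have hbB : b ∈ (((Finset.univ : Finset (Equiv.Perm (Fin K))).image beh).filter
        (fun b => b ⟨t, by omega⟩ ≠ ⟨t, by omega⟩)) := hb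
    rw [Finset.mem_filter] at hbB
    exact DyingGroupAux.trace_phi ht (hGinv b hbB.1) hbB.2
  refine ⟨h1, ?_⟩
  calc (((Finset.univ : Finset (Equiv.Perm (Fin K))).image beh).filter
        (fun b => b ⟨t, by omega⟩ = ⟨t, by omega⟩)).card
      = Multiset.card (Multiset.map
          (fun b : Fin K → Fin K => (((List.finRange K).drop t).map b).dedup)
          ((((Finset.univ : Finset (Equiv.Perm (Fin K))).image beh).filter
            (fun b => b ⟨t, by omega⟩ = ⟨t, by omega⟩)).val)) := by
        rw [Multiset.card_map, Finset.card_def]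
    _ = _ := by rw [h1, Multiset.card_map]
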